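/- In blind deconvolution with sparsity constraints on both factors: if n ≥ 2s₁s₂, then for almost all D ∈ ℂ^{n×m₁} and E ∈ ℂ^{n×m₂}, every pair (x₀,y₀) with ‖x₀‖₀ ≤ s₁, ‖y₀‖₀ ≤ s₂, x₀ ≠ 0, y₀ ≠ 0 is identifiable up to scaling: any (x,y) with ‖x‖₀ ≤ s₁, ‖y‖₀ ≤ s₂ and (Dx) ⊛ (Ey) = (Dx₀) ⊛ (Ey₀) satisfies x = σx₀, y = σ^{-1}y₀ for some nonzero σ ∈ ℂ. -/

import Mathlib

open MeasureTheory

lemma measurable_mv_eval {ι : Type*} [Fintype ι] (p : MvPolynomial ι ℂ) :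
    Measurable fun x : ι → ℂ => MvPolynomial.eval x p :=
  (MvPolynomial.continuous_eval p).measurable

lemma zero_set_null_fin : ∀ (N : ℕ) (p : MvPolynomial (Fin N) ℂ), p ≠ 0 →
    volume {x : Fin N → ℂ | MvPolynomial.eval x p = 0} = 0 := by
  intro N
  induction N with
  | zero =>
    intro p hp
    obtain ⟨c, rfl⟩ := MvPolynomial.C_surjective (Fin 0) p
    have hc : c ≠ 0 := fun hc => hp (by simp [hc])
    convert measure_empty
    · ext x; simp [hc]
    · infer_instance
  | succ N ih =>
    intro p hp
    set q := MvPolynomial.finSuccEquiv ℂ N p with hqdef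
    have hq : q ≠ 0 := by
      intro h
      apply hp
      have := (MvPolynomial.finSuccEquiv ℂ N).injective (a₁ := p) (a₂ := 0)
      simp only [map_zero] at this
      exact this (by rw [← hqdef, h])
    obtain ⟨k₀, hk₀⟩ : ∃ k, q.coeff k ≠ 0 := by
      by_contra hcon
      push_neg at hcon
      exact hq (Polynomial.ext fun k => by simp [hcon k])
    -- the target set in product form
    set T : Set ((Fin N → ℂ) × ℂ) :=
      {yz | Polynomial.eval yz.2 (q.map (MvPolynomial.eval yz.1)) = 0} with hT
    have hTmeas : MeasurableSet T := by
      have : T = (fun yz : (Fin N → ℂ) × ℂ =>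
          ∑ k ∈ Finset.range (q.natDegree + 1),
            MvPolynomial.eval yz.1 (q.coeff k) * yz.2 ^ k) ⁻¹' {0} := by
        ext yz
        simp only [hT, Set.mem_setOf_eq, Set.mem_preimage, Set.mem_singleton_iff]
        rw [Polynomial.eval_eq_sum_range'
          (lt_of_le_of_lt (Polynomial.natDegree_map_le) (Nat.lt_succ_self _))]
        simp [Polynomial.coeff_map]
      rw [this]
      have hg : Measurable fun yz : (Fin N → ℂ) × ℂ =>
          ∑ k ∈ Finset.range (q.natDegree + 1),
            MvPolynomial.eval yz.1 (q.coeff k) * yz.2 ^ k :=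
        Finset.measurable_sum _ fun k _ =>
          ((measurable_mv_eval _).comp measurable_fst).mul (measurable_snd.pow_const k)
      exact hg (measurableSet_singleton 0)
    have hTnull : (volume.prod volume) T = 0 := by
      rw [MeasureTheory.Measure.measure_prod_null hTmeas]
      rw [Filter.EventuallyEq]
      have hae : ∀ᵐ y : Fin N → ℂ ∂volume, MvPolynomial.eval y (q.coeff k₀) ≠ 0 := by
        have h0 := ih (q.coeff k₀) hk₀
        rw [ae_iff]
        simpa using h0
      filter_upwards [hae] with y hy
      simp only [Pi.zero_apply]
      have hrne : q.map (MvPolynomial.eval y) ≠ 0 := by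
        intro h0
        apply hy
        have := congrArg (fun r => Polynomial.coeff r k₀) h0
        simpa [Polynomial.coeff_map] using this
      have : (Prod.mk y ⁻¹' T) = {z | Polynomial.IsRoot (q.map (MvPolynomial.eval y)) z} := rfl
      rw [this]
      exact (Polynomial.finite_setOf_isRoot hrne).measure_zero _
    -- transport along the measurable equivs
    set e := MeasurableEquiv.piFinSuccAbove (fun _ : Fin (N + 1) => ℂ) 0 with he
    have hMP := MeasureTheory.volume_preserving_piFinSuccAbove (fun _ : Fin (N + 1) => ℂ) 0
    have hswap : MeasurableSet (Prod.swap ⁻¹' T : Set (ℂ × (Fin N → ℂ))) :=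
      hTmeas.preimage measurable_swap
    have hkey : {x : Fin (N+1) → ℂ | MvPolynomial.eval x p = 0}
        = ⇑e ⁻¹' (Prod.swap ⁻¹' T) := by
      ext x
      simp only [Set.mem_setOf_eq, Set.mem_preimage]
      have hx : x = Fin.cons (x 0) (fun j => x j.succ) := by
        funext j
        refine Fin.cases ?_ ?_ j <;> simp
      have := MvPolynomial.eval_eq_eval_mv_eval' (fun j => x (Fin.succ j)) (x 0) p
      rw [← hx] at this
      have hex : e x = (x 0, fun j => x j.succ) := by
        rfl
      rw [hex]
      simp only [Prod.swap, hT, Set.mem_setOf_eq]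
      rw [this]
    rw [hkey]
    rw [hMP.measure_preimage (hswap.nullMeasurableSet)]
    have h2 : volume (Prod.swap ⁻¹' T : Set (ℂ × (Fin N → ℂ))) = 0 := by
      rw [MeasureTheory.Measure.volume_eq_prod]
      rw [MeasureTheory.Measure.measurePreserving_swap.measure_preimage hTmeas.nullMeasurableSet]
      rw [← MeasureTheory.Measure.volume_eq_prod]
      simpa [MeasureTheory.Measure.volume_eq_prod] using hTnull
    exact h2

lemma zero_set_null {ι : Type*} [Fintype ι] (p : MvPolynomial ι ℂ) (hp : p ≠ 0) :
    volume {x : ι → ℂ | MvPolynomial.eval x p = 0} = 0 := by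
  classical
  set σ := (Fintype.equivFin ι).symm with hσ
  set φ := MeasurableEquiv.piCongrLeft (fun _ : ι => ℂ) σ with hφ
  have hMP := MeasureTheory.volume_measurePreserving_piCongrLeft (fun _ : ι => ℂ) σ
  have hS : MeasurableSet {x : ι → ℂ | MvPolynomial.eval x p = 0} :=
    (measurable_mv_eval p) (measurableSet_singleton 0)
  rw [← hMP.measure_preimage hS.nullMeasurableSet]
  have hpre : ⇑φ ⁻¹' {x : ι → ℂ | MvPolynomial.eval x p = 0}
      = {u : Fin (Fintype.card ι) → ℂ | MvPolynomial.eval u (MvPolynomial.rename σ.symm p) = 0} := by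
    ext u
    simp only [Set.mem_preimage, Set.mem_setOf_eq, MvPolynomial.eval_rename]
    have : φ u = u ∘ σ.symm := by
      funext i
      have := MeasurableEquiv.piCongrLeft_apply_apply σ (β := fun _ : ι => ℂ) u (σ.symm i)
      simpa using this
    rw [this]
  rw [hpre]
  apply zero_set_null_fin
  intro h0
  exact hp (MvPolynomial.rename_injective _ σ.symm.injective (by simpa using h0))

/-- Uncurrying measurable equivalence for matrices over `ℂ`. -/
def curryME (n m : ℕ) : (Fin n × Fin m → ℂ) ≃ᵐ (Fin n → Fin m → ℂ) where
  toFun f := fun i j => f (i, j)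
  invFun D := fun p => D p.1 p.2
  left_inv f := rfl
  right_inv D := rfl
  measurable_toFun :=
    measurable_pi_lambda _ fun i => measurable_pi_lambda _ fun j => measurable_pi_apply _
  measurable_invFun :=
    measurable_pi_lambda _ fun p => (measurable_pi_apply p.2).comp (measurable_pi_apply p.1)

lemma curryME_mp : ∀ n m : ℕ, MeasurePreserving (curryME n m) volume volume := by
  intro n
  induction n with
  | zero =>
    intro m
    refine ⟨(curryME 0 m).measurable, ?_⟩
    have h1 : (volume : Measure (Fin 0 × Fin m → ℂ)) = Measure.dirac (fun a => isEmptyElim a) := by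
      rw [volume_pi]; exact Measure.pi_of_empty _
    have h2 : (volume : Measure (Fin 0 → Fin m → ℂ)) = Measure.dirac (fun a => isEmptyElim a) := by
      rw [volume_pi]; exact Measure.pi_of_empty _
    rw [h1, h2, Measure.map_dirac' (curryME 0 m).measurable]
    exact congrArg Measure.dirac (Subsingleton.elim _ _)
  | succ n ih =>
    intro m
    -- index equivalence
    set E : (Fin m ⊕ Fin n × Fin m) ≃ (Fin (n+1) × Fin m) :=
      { toFun := Sum.elim (fun j => (0, j)) (fun p => (p.1.succ, p.2))
        invFun := fun q => Fin.cases (Sum.inl q.2) (fun i => Sum.inr (i, q.2)) q.1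
        left_inv := by rintro (j | p) <;> simp
        right_inv := by
          rintro ⟨i, j⟩
          refine Fin.cases ?_ ?_ i <;> simp } with hE
    have mp1 : MeasurePreserving
        (MeasurableEquiv.piCongrLeft (fun _ : Fin (n+1) × Fin m => ℂ) E).symm volume volume :=
      (MeasureTheory.volume_measurePreserving_piCongrLeft (fun _ => ℂ) E).symm _
    have mp2 : MeasurePreserving
        (MeasurableEquiv.sumPiEquivProdPi (fun _ : Fin m ⊕ Fin n × Fin m => ℂ)) volume volume :=
      MeasureTheory.volume_measurePreserving_sumPiEquivProdPi _
    have mp3 : MeasurePreserving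
        (Prod.map (id : (Fin m → ℂ) → (Fin m → ℂ)) (curryME n m)) volume volume := by
      rw [MeasureTheory.Measure.volume_eq_prod, MeasureTheory.Measure.volume_eq_prod (α := Fin m → ℂ)]
      exact (MeasurePreserving.id volume).prod (ih m)
    have mp4 : MeasurePreserving
        (MeasurableEquiv.piFinSuccAbove (fun _ : Fin (n+1) => Fin m → ℂ) 0).symm volume volume :=
      (MeasureTheory.volume_preserving_piFinSuccAbove (fun _ : Fin (n+1) => Fin m → ℂ) 0).symm _
    have hcomp := mp4.comp (mp3.comp (mp2.comp mp1))
    refine ⟨(curryME (n+1) m).measurable, ?_⟩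
    have hfun : ⇑(curryME (n+1) m) =
        (⇑(MeasurableEquiv.piFinSuccAbove (fun _ : Fin (n+1) => Fin m → ℂ) 0).symm) ∘
        (Prod.map (id : (Fin m → ℂ) → (Fin m → ℂ)) (curryME n m)) ∘
        (⇑(MeasurableEquiv.sumPiEquivProdPi (fun _ : Fin m ⊕ Fin n × Fin m => ℂ))) ∘
        (⇑(MeasurableEquiv.piCongrLeft (fun _ : Fin (n+1) × Fin m => ℂ) E).symm) := by
      funext f
      simp only [Function.comp_apply]
      have h1 : (MeasurableEquiv.piCongrLeft (fun _ : Fin (n+1) × Fin m => ℂ) E).symm f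
          = fun b => f (E b) := by
        funext b
        rw [MeasurableEquiv.piCongrLeft, MeasurableEquiv.symm]
        simp [Equiv.piCongrLeft, Equiv.piCongrLeft']
      rw [h1]
      have h2 : (MeasurableEquiv.sumPiEquivProdPi (fun _ : Fin m ⊕ Fin n × Fin m => ℂ))
          (fun b => f (E b)) = (fun j => f (E (Sum.inl j)), fun p => f (E (Sum.inr p))) := rfl
      rw [h2]
      have h3 : Prod.map (id : (Fin m → ℂ) → (Fin m → ℂ)) (curryME n m)
          ((fun j => f (E (Sum.inl j)), fun p => f (E (Sum.inr p))))
          = ((fun j => f (E (Sum.inl j))), fun i j => f (E (Sum.inr (i, j)))) := rfl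
      rw [h3]
      have h4 : (MeasurableEquiv.piFinSuccAbove (fun _ : Fin (n+1) => Fin m → ℂ) 0).symm
          ((fun j => f (E (Sum.inl j))), fun i j => f (E (Sum.inr (i, j))))
          = Fin.insertNth 0 (fun j => f (E (Sum.inl j))) (fun i j => f (E (Sum.inr (i, j)))) := rfl
      rw [h4, Fin.insertNth_zero]
      funext i
      refine Fin.cases ?_ ?_ i
      · simp [hE, curryME]
      · intro i
        simp [hE, curryME]
    rw [hfun]
    exact hcomp.map_eq

/-- Flattening of the pair-of-matrices space into a single `ℂ`-power. -/
noncomputable def flatP (n m₁ m₂ : ℕ) :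
    ((Fin n → Fin m₁ → ℂ) × (Fin n → Fin m₂ → ℂ)) ≃ᵐ
      ((Fin n × Fin m₁) ⊕ (Fin n × Fin m₂) → ℂ) :=
  ((curryME n m₁).prodCongr (curryME n m₂)).symm.trans
    (MeasurableEquiv.sumPiEquivProdPi
      (fun _ : (Fin n × Fin m₁) ⊕ (Fin n × Fin m₂) => ℂ)).symm

lemma flatP_mp (n m₁ m₂ : ℕ) : MeasurePreserving (flatP n m₁ m₂) volume volume := by
  have mpa : MeasurePreserving ((curryME n m₁).prodCongr (curryME n m₂)).symm volume volume := by
    refine MeasurePreserving.symm _ ?_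
    have : ⇑((curryME n m₁).prodCongr (curryME n m₂)) =
        Prod.map (curryME n m₁) (curryME n m₂) := rfl
    refine ⟨((curryME n m₁).prodCongr (curryME n m₂)).measurable, ?_⟩
    rw [this, MeasureTheory.Measure.volume_eq_prod, MeasureTheory.Measure.volume_eq_prod]
    exact ((curryME_mp n m₁).prod (curryME_mp n m₂)).map_eq
  have mpb := (MeasureTheory.volume_measurePreserving_sumPiEquivProdPi
      (fun _ : (Fin n × Fin m₁) ⊕ (Fin n × Fin m₂) => ℂ)).symm _
  exact mpb.comp mpa

lemma flatP_inl {n m₁ m₂ : ℕ} (DE : (Fin n → Fin m₁ → ℂ) × (Fin n → Fin m₂ → ℂ))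
    (i : Fin n) (p : Fin m₁) : flatP n m₁ m₂ DE (Sum.inl (i, p)) = DE.1 i p := rfl

lemma flatP_inr {n m₁ m₂ : ℕ} (DE : (Fin n → Fin m₁ → ℂ) × (Fin n → Fin m₂ → ℂ))
    (i : Fin n) (q : Fin m₂) : flatP n m₁ m₂ DE (Sum.inr (i, q)) = DE.2 i q := rfl

noncomputable def omN (n : ℕ) : ℂ := Complex.exp (2 * Real.pi * Complex.I / n)

lemma omN_pow_n {n : ℕ} (hn : 0 < n) : omN n ^ n = 1 := by
  rw [omN, ← Complex.exp_nat_mul]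
  have hne : (n : ℂ) ≠ 0 := Nat.cast_ne_zero.mpr hn.ne'
  have : (n : ℂ) * (2 * Real.pi * Complex.I / n) = 2 * Real.pi * Complex.I := by
    field_simp
  rw [this, Complex.exp_two_pi_mul_I]

lemma omN_pow_mod {n : ℕ} (hn : 0 < n) (a : ℕ) : omN n ^ a = omN n ^ (a % n) := by
  conv_lhs => rw [← Nat.div_add_mod a n]
  rw [pow_add, pow_mul, omN_pow_n hn, one_pow, one_mul]

lemma omN_pow_congr {n : ℕ} (hn : 0 < n) {a b : ℕ} (h : a ≡ b [MOD n]) :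
    omN n ^ a = omN n ^ b := by
  rw [omN_pow_mod hn a, omN_pow_mod hn b, h]

lemma omN_inj {n : ℕ} (hn : 0 < n) {a b : ℕ} (ha : a < n) (hb : b < n)
    (h : omN n ^ a = omN n ^ b) : a = b := by
  have hne : (n : ℂ) ≠ 0 := Nat.cast_ne_zero.mpr hn.ne'
  set c : ℂ := 2 * Real.pi * Complex.I / n with hc
  have hcne : c ≠ 0 := by
    rw [hc]
    exact div_ne_zero (by
      simpa [mul_assoc] using Complex.two_pi_I_ne_zero) hne
  have hpow : ∀ a : ℕ, omN n ^ a = Complex.exp (a * c) := by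
    intro a
    rw [omN, ← Complex.exp_nat_mul, hc]
  rw [hpow a, hpow b, Complex.exp_eq_exp_iff_exists_int] at h
  obtain ⟨m, hm⟩ := h
  have h2 : (2 : ℂ) * Real.pi * Complex.I = n * c := by
    rw [hc]; field_simp
  rw [h2] at hm
  have : ((a : ℂ) - b - m * n) * c = 0 := by ring_nf; ring_nf at hm; linear_combination hm
  have h3 : (a : ℂ) - b - m * n = 0 := by
    rcases mul_eq_zero.mp this with h' | h'
    · exact h'
    · exact absurd h' hcne
  have h4 : ((a : ℤ) - b - m * n : ℤ) = 0 := by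
    exact_mod_cast (by push_cast; exact_mod_cast h3 : (((a : ℤ) - b - m * n : ℤ) : ℂ) = 0)
  have hab : (a : ℤ) - b = m * n := by linarith [h4]
  -- |a - b| < n forces m = 0
  have hm0 : m = 0 := by
    by_contra hm0
    have h1 : (1 : ℤ) ≤ |m| := Int.one_le_abs (by omega)
    have habs : |(a : ℤ) - b| < n := by
      rw [abs_sub_lt_iff]; omega
    rw [hab, abs_mul, abs_of_nonneg (by positivity : (0:ℤ) ≤ (n:ℤ))] at habs
    nlinarith [h1, habs]
  rw [hm0] at hab
  simp at hab
  omega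

/-- `Ahat D k p = (F D)ₖₚ`, the DFT of the columns of `D`. -/
noncomputable def Ahat {n m : ℕ} (D : Fin n → Fin m → ℂ) (k : Fin n) (p : Fin m) : ℂ :=
  ∑ i, omN n ^ (k.val * i.val) * D i p

/-- The convolution kernel coefficients. -/
noncomputable def CC {n m₁ m₂ : ℕ} (D : Fin n → Fin m₁ → ℂ) (E : Fin n → Fin m₂ → ℂ)
    (i : Fin n) (p : Fin m₁) (q : Fin m₂) : ℂ :=
  ∑ j, D j p * E (i - j) q

lemma fourier_CC {n m₁ m₂ : ℕ} (hn : 0 < n) (D : Fin n → Fin m₁ → ℂ)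
    (E : Fin n → Fin m₂ → ℂ) (k : Fin n) (p : Fin m₁) (q : Fin m₂) :
    ∑ i, omN n ^ (k.val * i.val) * CC D E i p q = Ahat D k p * Ahat E k q := by
  haveI : NeZero n := ⟨hn.ne'⟩
  unfold CC Ahat
  rw [Finset.sum_mul_sum]
  simp_rw [Finset.mul_sum]
  rw [Finset.sum_comm]
  refine Finset.sum_congr rfl fun j _ => ?_
  refine Fintype.sum_equiv (Equiv.subRight j) _ _ fun i' => ?_
  have h2 : omN n ^ (k.val * i'.val)
      = omN n ^ (k.val * j.val) * omN n ^ (k.val * (i' - j).val) := by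
    rw [← pow_add]
    apply omN_pow_congr hn
    have hadd : (i' - j) + j = i' := sub_add_cancel i' j
    have hval : i'.val = ((i' - j).val + j.val) % n := by
      conv_lhs => rw [← hadd]
      rw [Fin.add_def]
    rw [hval]
    calc k.val * (((i' - j).val + j.val) % n)
        ≡ k.val * ((i' - j).val + j.val) [MOD n] :=
          Nat.ModEq.mul_left _ (Nat.mod_modEq _ _)
      _ = k.val * j.val + k.val * (i' - j).val := by ring
  show omN n ^ (k.val * i'.val) * (D j p * E (i' - j) q) = _
  rw [h2]
  simp only [Equiv.subRight_apply]
  ring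

lemma det_vanish {n m₁ m₂ : ℕ} (hn : 0 < n) (D : Fin n → Fin m₁ → ℂ)
    (E : Fin n → Fin m₂ → ℂ) (Ω : Finset (Fin m₁ × Fin m₂)) (hcard : Ω.card ≤ n)
    (M : Fin m₁ → Fin m₂ → ℂ)
    (hsupp : ∀ p q, (p, q) ∉ Ω → M p q = 0) (hM : M ≠ 0)
    (hker : ∀ i, ∑ p, ∑ q, CC D E i p q * M p q = 0) :
    (Matrix.of fun k j : Fin Ω.card =>
      Ahat D (Fin.castLE hcard k) (Ω.equivFin.symm j).1.1 *
      Ahat E (Fin.castLE hcard k) (Ω.equivFin.symm j).1.2).det = 0 := by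
  classical
  have step1 : ∀ k : Fin n, ∑ p, ∑ q, (Ahat D k p * Ahat E k q) * M p q = 0 := by
    intro k
    have h1 : ∑ i, omN n ^ (k.val * i.val) * (∑ p, ∑ q, CC D E i p q * M p q)
        = ∑ p, ∑ q, (Ahat D k p * Ahat E k q) * M p q := by
      simp_rw [Finset.mul_sum]
      rw [Finset.sum_comm]
      refine Finset.sum_congr rfl fun p _ => ?_
      rw [Finset.sum_comm]
      refine Finset.sum_congr rfl fun q _ => ?_
      simp_rw [← mul_assoc]
      rw [← Finset.sum_mul, fourier_CC hn D E k p q]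
    rw [← h1]
    simp [hker]
  set t := Ω.card with ht
  set eΩ : Fin t ≃ ↥Ω := Ω.equivFin.symm with heΩ
  set m' : Fin t → ℂ := fun j => M (eΩ j).1.1 (eΩ j).1.2 with hm'def
  have hm' : m' ≠ 0 := by
    obtain ⟨p, q, hpq⟩ : ∃ p q, M p q ≠ 0 := by
      by_contra hc
      push_neg at hc
      exact hM (by funext p q; exact hc p q)
    have hmem : (p, q) ∈ Ω := by
      by_contra hng
      exact hpq (hsupp p q hng)
    intro h0
    have h1 := congrFun h0 (eΩ.symm ⟨(p, q), hmem⟩)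
    simp only [hm'def, Equiv.apply_symm_apply, Pi.zero_apply] at h1
    exact hpq h1
  have hmv : (Matrix.of fun k j : Fin t =>
      Ahat D (Fin.castLE hcard k) (eΩ j).1.1 *
      Ahat E (Fin.castLE hcard k) (eΩ j).1.2).mulVec m' = 0 := by
    funext k
    show ∑ j, (Ahat D (Fin.castLE hcard k) (eΩ j).1.1 *
      Ahat E (Fin.castLE hcard k) (eΩ j).1.2) * m' j = 0
    set K := Fin.castLE hcard k with hK
    have h2 : ∑ j : Fin t, (Ahat D K (eΩ j).1.1 * Ahat E K (eΩ j).1.2) * m' j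
        = ∑ pq ∈ Ω, (Ahat D K pq.1 * Ahat E K pq.2) * M pq.1 pq.2 := by
      rw [← Finset.sum_coe_sort Ω (fun pq => (Ahat D K pq.1 * Ahat E K pq.2) * M pq.1 pq.2)]
      exact Fintype.sum_equiv eΩ _ _ fun j => rfl
    rw [h2]
    have hvan : ∀ pq ∈ (Finset.univ : Finset (Fin m₁ × Fin m₂)), pq ∉ Ω →
        Ahat D K pq.1 * Ahat E K pq.2 * M pq.1 pq.2 = 0 := by
      intro pq _ hnot
      rw [hsupp pq.1 pq.2 (by simpa using hnot), mul_zero]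
    rw [Finset.sum_subset (Finset.subset_univ Ω) hvan]
    rw [Fintype.sum_prod_type]
    exact step1 K
  exact Matrix.exists_mulVec_eq_zero_iff.mp ⟨m', hm', hmv⟩

lemma two_pow_inj : Function.Injective fun a : ℕ => (2 : ℂ) ^ a := by
  intro a b hab
  have h : ((2 ^ a : ℕ) : ℂ) = ((2 ^ b : ℕ) : ℂ) := by push_cast; simpa using hab
  exact Nat.pow_right_injective le_rfl (Nat.cast_injective h)

lemma witness_exists {n m₁ m₂ : ℕ} (hn : 0 < n) (Ω : Finset (Fin m₁ × Fin m₂))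
    (hcard : Ω.card ≤ n) :
    ∃ (D : Fin n → Fin m₁ → ℂ) (E : Fin n → Fin m₂ → ℂ),
      (Matrix.of fun k j : Fin Ω.card =>
        Ahat D (Fin.castLE hcard k) (Ω.equivFin.symm j).1.1 *
        Ahat E (Fin.castLE hcard k) (Ω.equivFin.symm j).1.2).det ≠ 0 := by
  classical
  set F : Matrix (Fin n) (Fin n) ℂ := Matrix.of fun k i => omN n ^ (k.val * i.val) with hFdef
  have hFv : F = Matrix.vandermonde (fun k : Fin n => omN n ^ (k.val)) := by
    ext k i
    simp only [hFdef, Matrix.of_apply, Matrix.vandermonde_apply]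
    rw [← pow_mul]
  have hF : IsUnit F.det := by
    rw [hFv, Matrix.det_vandermonde]
    apply isUnit_iff_ne_zero.mpr
    rw [Finset.prod_ne_zero_iff]
    intro i _
    rw [Finset.prod_ne_zero_iff]
    intro j hj
    rw [Finset.mem_Ioi] at hj
    refine sub_ne_zero_of_ne fun hc => ?_
    exact absurd (Fin.val_injective (omN_inj hn j.isLt i.isLt hc)) (by
      intro h; exact (lt_irrefl i) (h ▸ hj))
  set A₀ : Matrix (Fin n) (Fin m₁) ℂ := Matrix.of fun k p => (2:ℂ) ^ (k.val * p.val) with hA₀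
  set B₀ : Matrix (Fin n) (Fin m₂) ℂ :=
    Matrix.of fun k q => (2:ℂ) ^ (k.val * (m₁ * q.val)) with hB₀
  refine ⟨F⁻¹ * A₀, F⁻¹ * B₀, ?_⟩
  have hAhat : ∀ (k : Fin n) (p : Fin m₁), Ahat (F⁻¹ * A₀ : Matrix _ _ ℂ) k p = A₀ k p := by
    intro k p
    have h1 : Ahat (F⁻¹ * A₀ : Matrix _ _ ℂ) k p = (F * (F⁻¹ * A₀)) k p := by
      rw [Matrix.mul_apply]; unfold Ahat
      exact Finset.sum_congr rfl fun i _ => rfl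
    rw [h1, Matrix.mul_nonsing_inv_cancel_left _ _ hF]
  have hBhat : ∀ (k : Fin n) (q : Fin m₂), Ahat (F⁻¹ * B₀ : Matrix _ _ ℂ) k q = B₀ k q := by
    intro k q
    have h1 : Ahat (F⁻¹ * B₀ : Matrix _ _ ℂ) k q = (F * (F⁻¹ * B₀)) k q := by
      rw [Matrix.mul_apply]; unfold Ahat
      exact Finset.sum_congr rfl fun i _ => rfl
    rw [h1, Matrix.mul_nonsing_inv_cancel_left _ _ hF]
  have hmat : (Matrix.of fun k j : Fin Ω.card =>
        Ahat (F⁻¹ * A₀ : Matrix _ _ ℂ) (Fin.castLE hcard k) (Ω.equivFin.symm j).1.1 *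
        Ahat (F⁻¹ * B₀ : Matrix _ _ ℂ) (Fin.castLE hcard k) (Ω.equivFin.symm j).1.2)
      = (Matrix.vandermonde (fun j : Fin Ω.card =>
          (2:ℂ) ^ ((Ω.equivFin.symm j).1.1.val + m₁ * (Ω.equivFin.symm j).1.2.val))).transpose := by
    ext k j
    rw [Matrix.of_apply, hAhat, hBhat]
    simp only [Matrix.transpose_apply, Matrix.vandermonde_apply, hA₀, hB₀, Matrix.of_apply]
    rw [← pow_mul, ← pow_add]
    congr 1
    simp only [Fin.coe_castLE]
    ring
  rw [hmat, Matrix.det_transpose, Matrix.det_vandermonde]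
  rw [Finset.prod_ne_zero_iff]
  intro i _
  rw [Finset.prod_ne_zero_iff]
  intro j hj
  rw [Finset.mem_Ioi] at hj
  refine sub_ne_zero_of_ne fun hc => ?_
  have hexp := two_pow_inj hc
  have hp1 : (Ω.equivFin.symm j).1.1 = (Ω.equivFin.symm i).1.1 := by
    have h1 := congrArg (· % m₁) hexp
    simp only [Nat.add_mul_mod_self_left] at h1
    exact Fin.val_injective (by
      rwa [Nat.mod_eq_of_lt (Ω.equivFin.symm j).1.1.isLt,
        Nat.mod_eq_of_lt (Ω.equivFin.symm i).1.1.isLt] at h1)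
  have hm₁pos : 0 < m₁ := (Ω.equivFin.symm j).1.1.pos
  have hp2 : (Ω.equivFin.symm j).1.2 = (Ω.equivFin.symm i).1.2 := by
    have h1 := congrArg (· / m₁) hexp
    simp only [Nat.add_mul_div_left _ _ hm₁pos] at h1
    rw [Nat.div_eq_of_lt (Ω.equivFin.symm j).1.1.isLt,
      Nat.div_eq_of_lt (Ω.equivFin.symm i).1.1.isLt] at h1
    exact Fin.val_injective (by simpa using h1)
  have : (Ω.equivFin.symm j) = (Ω.equivFin.symm i) := by
    apply Subtype.ext
    exact Prod.ext hp1 hp2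
  have := Ω.equivFin.symm.injective this
  exact (lt_irrefl i) (this ▸ hj)

noncomputable def polyA (n m₁ m₂ : ℕ) (k : Fin n) (p : Fin m₁) :
    MvPolynomial ((Fin n × Fin m₁) ⊕ (Fin n × Fin m₂)) ℂ :=
  ∑ i, MvPolynomial.C (omN n ^ (k.val * i.val)) * MvPolynomial.X (Sum.inl (i, p))

noncomputable def polyB (n m₁ m₂ : ℕ) (k : Fin n) (q : Fin m₂) :
    MvPolynomial ((Fin n × Fin m₁) ⊕ (Fin n × Fin m₂)) ℂ :=
  ∑ i, MvPolynomial.C (omN n ^ (k.val * i.val)) * MvPolynomial.X (Sum.inr (i, q))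

lemma eval_polyA {n m₁ m₂ : ℕ} (DE : (Fin n → Fin m₁ → ℂ) × (Fin n → Fin m₂ → ℂ))
    (k : Fin n) (p : Fin m₁) :
    MvPolynomial.eval (flatP n m₁ m₂ DE) (polyA n m₁ m₂ k p) = Ahat DE.1 k p := by
  simp only [polyA, map_sum, map_mul, MvPolynomial.eval_C, MvPolynomial.eval_X, Ahat]
  exact Finset.sum_congr rfl fun i _ => by rw [flatP_inl]

lemma eval_polyB {n m₁ m₂ : ℕ} (DE : (Fin n → Fin m₁ → ℂ) × (Fin n → Fin m₂ → ℂ))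
    (k : Fin n) (q : Fin m₂) :
    MvPolynomial.eval (flatP n m₁ m₂ DE) (polyB n m₁ m₂ k q) = Ahat DE.2 k q := by
  simp only [polyB, map_sum, map_mul, MvPolynomial.eval_C, MvPolynomial.eval_X, Ahat]
  exact Finset.sum_congr rfl fun i _ => by rw [flatP_inr]

noncomputable def QΩ (n m₁ m₂ : ℕ) (Ω : Finset (Fin m₁ × Fin m₂)) (hc : Ω.card ≤ n) :
    MvPolynomial ((Fin n × Fin m₁) ⊕ (Fin n × Fin m₂)) ℂ :=
  (Matrix.of fun k j : Fin Ω.card =>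
    polyA n m₁ m₂ (Fin.castLE hc k) (Ω.equivFin.symm j).1.1 *
    polyB n m₁ m₂ (Fin.castLE hc k) (Ω.equivFin.symm j).1.2).det

lemma eval_QΩ {n m₁ m₂ : ℕ} (Ω : Finset (Fin m₁ × Fin m₂)) (hc : Ω.card ≤ n)
    (DE : (Fin n → Fin m₁ → ℂ) × (Fin n → Fin m₂ → ℂ)) :
    MvPolynomial.eval (flatP n m₁ m₂ DE) (QΩ n m₁ m₂ Ω hc) =
      (Matrix.of fun k j : Fin Ω.card =>
        Ahat DE.1 (Fin.castLE hc k) (Ω.equivFin.symm j).1.1 *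
        Ahat DE.2 (Fin.castLE hc k) (Ω.equivFin.symm j).1.2).det := by
  rw [QΩ, RingHom.map_det]
  congr 1
  ext k j
  simp only [RingHom.mapMatrix_apply, Matrix.map_apply, Matrix.of_apply, map_mul]
  rw [eval_polyA, eval_polyB]

lemma bad_set_null {n m₁ m₂ : ℕ} (hn : 0 < n) (Ω : Finset (Fin m₁ × Fin m₂))
    (hc : Ω.card ≤ n) :
    volume {DE : (Fin n → Fin m₁ → ℂ) × (Fin n → Fin m₂ → ℂ) |
      (Matrix.of fun k j : Fin Ω.card =>
        Ahat DE.1 (Fin.castLE hc k) (Ω.equivFin.symm j).1.1 *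
        Ahat DE.2 (Fin.castLE hc k) (Ω.equivFin.symm j).1.2).det = 0} = 0 := by
  have hQ : QΩ n m₁ m₂ Ω hc ≠ 0 := by
    obtain ⟨D₀, E₀, hdet⟩ := witness_exists hn Ω hc
    intro h0
    apply hdet
    have := eval_QΩ Ω hc (D₀, E₀)
    rw [h0] at this
    simpa using this.symm
  have hset : {DE : (Fin n → Fin m₁ → ℂ) × (Fin n → Fin m₂ → ℂ) |
      (Matrix.of fun k j : Fin Ω.card =>
        Ahat DE.1 (Fin.castLE hc k) (Ω.equivFin.symm j).1.1 *
        Ahat DE.2 (Fin.castLE hc k) (Ω.equivFin.symm j).1.2).det = 0}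
      = ⇑(flatP n m₁ m₂) ⁻¹' {x | MvPolynomial.eval x (QΩ n m₁ m₂ Ω hc) = 0} := by
    ext DE
    simp only [Set.mem_setOf_eq, Set.mem_preimage, eval_QΩ]
  rw [hset]
  have hmeas : MeasurableSet {x : ((Fin n × Fin m₁) ⊕ (Fin n × Fin m₂)) → ℂ |
      MvPolynomial.eval x (QΩ n m₁ m₂ Ω hc) = 0} :=
    (measurable_mv_eval _) (measurableSet_singleton 0)
  rw [(flatP_mp n m₁ m₂).measure_preimage hmeas.nullMeasurableSet]
  exact zero_set_null _ hQ

/-- Circular convolution of two vectors in `ℂ^n`. -/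
noncomputable def cconv {n : ℕ} (u v : Fin n → ℂ) : Fin n → ℂ :=
  fun i => ∑ j, u j * v (i - j)

/-- Matrix-vector multiplication. -/
noncomputable def mulVecF {n m : ℕ} (A : Fin n → Fin m → ℂ) (x : Fin m → ℂ) : Fin n → ℂ :=
  fun i => ∑ j, A i j * x j

/-- The number of nonzero entries (`ℓ₀` "norm") of a vector. -/
noncomputable def sparsity {m : ℕ} (x : Fin m → ℂ) : ℕ := {j | x j ≠ 0}.ncard

lemma sparsity_eq {m : ℕ} (x : Fin m → ℂ) [DecidablePred fun j => x j ≠ 0] :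
    sparsity x = (Finset.univ.filter fun j => x j ≠ 0).card := by
  rw [sparsity]
  rw [show {j | x j ≠ 0} = ↑(Finset.univ.filter fun j => x j ≠ 0) by ext j; simp]
  exact Set.ncard_coe_finset _

lemma cconv_bilinear {n m₁ m₂ : ℕ} (D : Fin n → Fin m₁ → ℂ) (E : Fin n → Fin m₂ → ℂ)
    (x : Fin m₁ → ℂ) (y : Fin m₂ → ℂ) (i : Fin n) :
    cconv (mulVecF D x) (mulVecF E y) i = ∑ p, ∑ q, CC D E i p q * (x p * y q) := by
  unfold cconv mulVecF CC
  simp_rw [Finset.sum_mul_sum, Finset.sum_mul]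
  rw [Finset.sum_comm]
  refine Finset.sum_congr rfl fun p _ => ?_
  rw [Finset.sum_comm]
  refine Finset.sum_congr rfl fun q _ => ?_
  refine Finset.sum_congr rfl fun j _ => ?_
  ring

/-- Theorem 3.6 (sparsity constraints): if `n ≥ 2s₁s₂`, then for almost all `D, E`, every
`(x₀,y₀)` with `‖x₀‖₀ ≤ s₁`, `‖y₀‖₀ ≤ s₂`, `x₀ ≠ 0`, `y₀ ≠ 0` is identifiable up to scaling
among pairs `(x,y)` with `‖x‖₀ ≤ s₁`, `‖y‖₀ ≤ s₂`. -/
theorem blind_deconv_sparse_identifiability {n m₁ m₂ s₁ s₂ : ℕ} (h : 2 * s₁ * s₂ ≤ n) :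
    ∀ᵐ DE : (Fin n → Fin m₁ → ℂ) × (Fin n → Fin m₂ → ℂ) ∂volume,
      ∀ x₀ : Fin m₁ → ℂ, ∀ y₀ : Fin m₂ → ℂ,
        sparsity x₀ ≤ s₁ → sparsity y₀ ≤ s₂ → x₀ ≠ 0 → y₀ ≠ 0 →
        ∀ x : Fin m₁ → ℂ, ∀ y : Fin m₂ → ℂ, sparsity x ≤ s₁ → sparsity y ≤ s₂ →
          cconv (mulVecF DE.1 x) (mulVecF DE.2 y) =
            cconv (mulVecF DE.1 x₀) (mulVecF DE.2 y₀) →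
          ∃ σ : ℂ, σ ≠ 0 ∧ x = σ • x₀ ∧ y = σ⁻¹ • y₀ := by
  classical
  -- degenerate sparsity levels: the hypotheses are contradictory
  have hvac : ∀ {m : ℕ} (z : Fin m → ℂ), sparsity z = 0 → z = 0 := by
    intro m z hz
    rw [sparsity, Set.ncard_eq_zero (Set.toFinite _)] at hz
    funext j
    by_contra hj
    exact absurd hz (Set.nonempty_iff_ne_empty.mp ⟨j, hj⟩)
  rcases Nat.eq_zero_or_pos s₁ with hs₁ | hs₁
  · refine MeasureTheory.ae_of_all _ fun DE x₀ y₀ hx₀s _ hx₀ne _ => absurd (hvac x₀ ?_) hx₀ne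
    omega
  rcases Nat.eq_zero_or_pos s₂ with hs₂ | hs₂
  · refine MeasureTheory.ae_of_all _ fun DE x₀ y₀ _ hy₀s _ hy₀ne => absurd (hvac y₀ ?_) ?_
    · omega
    · exact hy₀ne
  have hn : 0 < n := lt_of_lt_of_le (by positivity) h
  -- the bad set
  set N : Set ((Fin n → Fin m₁ → ℂ) × (Fin n → Fin m₂ → ℂ)) :=
    ⋃ (Ω : Finset (Fin m₁ × Fin m₂)), ⋃ (hc : Ω.card ≤ 2 * s₁ * s₂),
      {DE | (Matrix.of fun k j : Fin Ω.card =>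
        Ahat DE.1 (Fin.castLE (hc.trans h) k) (Ω.equivFin.symm j).1.1 *
        Ahat DE.2 (Fin.castLE (hc.trans h) k) (Ω.equivFin.symm j).1.2).det = 0} with hN
  have hNnull : volume N = 0 := by
    refine MeasureTheory.measure_iUnion_null fun Ω => MeasureTheory.measure_iUnion_null fun hc => ?_
    exact bad_set_null hn Ω (hc.trans h)
  rw [MeasureTheory.ae_iff]
  refine MeasureTheory.measure_mono_null ?_ hNnull
  intro DE hDE
  by_contra hnot
  apply hDE
  -- `DE` is good: all the determinants are nonzero
  have hgood : ∀ (Ω : Finset (Fin m₁ × Fin m₂)) (hc : Ω.card ≤ 2 * s₁ * s₂),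
      (Matrix.of fun k j : Fin Ω.card =>
        Ahat DE.1 (Fin.castLE (hc.trans h) k) (Ω.equivFin.symm j).1.1 *
        Ahat DE.2 (Fin.castLE (hc.trans h) k) (Ω.equivFin.symm j).1.2).det ≠ 0 := by
    intro Ω hc hdet
    exact hnot (Set.mem_iUnion.mpr ⟨Ω, Set.mem_iUnion.mpr ⟨hc, hdet⟩⟩)
  -- now prove the identifiability property
  intro x₀ y₀ hx₀s hy₀s hx₀ne hy₀ne x y hxs hys hconv
  set D := DE.1 with hD
  set E := DE.2 with hE
  set M : Fin m₁ → Fin m₂ → ℂ := fun p q => x p * y q - x₀ p * y₀ q with hM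
  -- support set
  set Sx := Finset.univ.filter fun j => x j ≠ 0 with hSx
  set Sy := Finset.univ.filter fun j => y j ≠ 0 with hSy
  set Sx₀ := Finset.univ.filter fun j => x₀ j ≠ 0 with hSx₀
  set Sy₀ := Finset.univ.filter fun j => y₀ j ≠ 0 with hSy₀
  set Ω₀ : Finset (Fin m₁ × Fin m₂) := (Sx ×ˢ Sy) ∪ (Sx₀ ×ˢ Sy₀) with hΩ₀
  have hcard₀ : Ω₀.card ≤ 2 * s₁ * s₂ := by
    calc Ω₀.card ≤ (Sx ×ˢ Sy).card + (Sx₀ ×ˢ Sy₀).card := Finset.card_union_le _ _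
      _ = Sx.card * Sy.card + Sx₀.card * Sy₀.card := by rw [Finset.card_product, Finset.card_product]
      _ ≤ s₁ * s₂ + s₁ * s₂ := by
          have h1 : Sx.card ≤ s₁ := by rw [hSx, ← sparsity_eq]; exact hxs
          have h2 : Sy.card ≤ s₂ := by rw [hSy, ← sparsity_eq]; exact hys
          have h3 : Sx₀.card ≤ s₁ := by rw [hSx₀, ← sparsity_eq]; exact hx₀s
          have h4 : Sy₀.card ≤ s₂ := by rw [hSy₀, ← sparsity_eq]; exact hy₀s
          exact Nat.add_le_add (Nat.mul_le_mul h1 h2) (Nat.mul_le_mul h3 h4)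
      _ = 2 * s₁ * s₂ := by ring
  have hsupp : ∀ p q, (p, q) ∉ Ω₀ → M p q = 0 := by
    intro p q hpq
    simp only [hΩ₀, Finset.mem_union, Finset.mem_product, hSx, hSy, hSx₀, hSy₀,
      Finset.mem_filter, Finset.mem_univ, true_and, not_or, not_and_or, not_not] at hpq
    obtain ⟨h1, h2⟩ := hpq
    have e1 : x p * y q = 0 := by rcases h1 with h | h <;> simp [h]
    have e2 : x₀ p * y₀ q = 0 := by rcases h2 with h | h <;> simp [h]
    simp [hM, e1, e2]
  have hker : ∀ i, ∑ p, ∑ q, CC D E i p q * M p q = 0 := by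
    intro i
    have hci := congrFun hconv i
    rw [cconv_bilinear D E x y i, cconv_bilinear D E x₀ y₀ i] at hci
    simp only [hM, mul_sub]
    rw [Finset.sum_congr rfl fun p _ => Finset.sum_sub_distrib _ _, Finset.sum_sub_distrib]
    rw [hci]
    exact sub_self _
  by_cases hMzero : M = 0
  · -- extract the scaling factor
    obtain ⟨p₀, hp₀⟩ : ∃ p, x₀ p ≠ 0 := by
      by_contra hcon
      push_neg at hcon
      exact hx₀ne (funext hcon)
    obtain ⟨q₀, hq₀⟩ : ∃ q, y₀ q ≠ 0 := by
      by_contra hcon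
      push_neg at hcon
      exact hy₀ne (funext hcon)
    have hpq : ∀ p q, x p * y q = x₀ p * y₀ q := by
      intro p q
      have := congrFun (congrFun hMzero p) q
      simpa [hM, sub_eq_zero] using this
    have hprod : x p₀ * y q₀ ≠ 0 := by
      rw [hpq p₀ q₀]
      exact mul_ne_zero hp₀ hq₀
    obtain ⟨hxp₀, hyq₀⟩ := mul_ne_zero_iff.mp hprod
    refine ⟨x p₀ / x₀ p₀, div_ne_zero hxp₀ hp₀, ?_, ?_⟩
    · funext i
      show x i = (x p₀ / x₀ p₀) * x₀ i
      have key : x i * x₀ p₀ * y q₀ = x₀ i * x p₀ * y q₀ := by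
        calc x i * x₀ p₀ * y q₀ = (x i * y q₀) * x₀ p₀ := by ring
          _ = (x₀ i * y₀ q₀) * x₀ p₀ := by rw [hpq i q₀]
          _ = x₀ i * (x₀ p₀ * y₀ q₀) := by ring
          _ = x₀ i * (x p₀ * y q₀) := by rw [← hpq p₀ q₀]
          _ = x₀ i * x p₀ * y q₀ := by ring
      have key2 := mul_right_cancel₀ hyq₀ key
      field_simp
      linear_combination key2
    · funext j
      show y j = (x p₀ / x₀ p₀)⁻¹ * y₀ j
      rw [inv_div]
      have hkey := hpq p₀ j
      field_simp
      linear_combination hkey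
  · exact absurd (det_vanish hn D E Ω₀ (hcard₀.trans h) M hsupp hMzero hker)
      (hgood Ω₀ hcard₀)
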